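/- (A fat half-level set) Let d ≥ 1, let E := {x ∈ ℝ^d : ⌊x_d⌋ is even} and K := 2^{−d} χ_{[−1,1]^d}. Then (K ∗ χ_E)(x) = 1/2 for every x ∈ ℝ^d; in particular T_K E = ∅ and T_K(Eᶜ) = ∅, so the level set {x : (K ∗ χ_E)(x) = 1/2} is all of ℝ^d. -/

import Mathlib

open MeasureTheory

/-- The convolution of a kernel `K` with the indicator function of a set `E`. -/
noncomputable def conv {d : ℕ} (K : EuclideanSpace ℝ (Fin d) → ℝ)
    (E : Set (EuclideanSpace ℝ (Fin d))) (x : EuclideanSpace ℝ (Fin d)) : ℝ :=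
  ∫ y, K (x - y) * E.indicator (fun _ => (1 : ℝ)) y

/-- The thresholding operator `T_K E = {x | (K ∗ χ_E)(x) > 1/2}`. -/
def thresh {d : ℕ} (K : EuclideanSpace ℝ (Fin d) → ℝ)
    (E : Set (EuclideanSpace ℝ (Fin d))) : Set (EuclideanSpace ℝ (Fin d)) :=
  {x | 1 / 2 < conv K E x}

lemma evenFloor_measurable : MeasurableSet {t : ℝ | Even ⌊t⌋} := by
  have : {t : ℝ | Even ⌊t⌋} = Int.floor ⁻¹' {n | Even n} := rfl
  rw [this]; exact Int.measurable_floor trivial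

lemma vol_even_floor (a : ℝ) : volume (Set.Icc a (a+2) ∩ {t | Even ⌊t⌋}) = 1 := by
  have hfa := Int.floor_le a
  have hfa' := Int.lt_floor_add_one a
  rcases Int.even_or_odd ⌊a⌋ with he | ho
  · have hset : Set.Icc a (a+2) ∩ {t | Even ⌊t⌋}
        = Set.Ico a (⌊a⌋+1) ∪ Set.Icc (⌊a⌋+2 : ℝ) (a+2) := by
      ext t
      simp only [Set.mem_inter_iff, Set.mem_Icc, Set.mem_setOf_eq, Set.mem_union,
        Set.mem_Ico]
      constructor
      · rintro ⟨⟨h1, h2⟩, h3⟩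
        have l1 : (⌊a⌋ : ℤ) ≤ ⌊t⌋ := Int.floor_le_floor h1
        have l2 : ⌊t⌋ ≤ ⌊a⌋ + 2 := by
          have h4 : ⌊a + 2⌋ = ⌊a⌋ + 2 := by
            rw [show a + 2 = a + (2:ℤ) by push_cast; ring, Int.floor_add_intCast]
          have := Int.floor_le_floor h2; omega
        have : ⌊t⌋ = ⌊a⌋ ∨ ⌊t⌋ = ⌊a⌋ + 2 := by
          rcases he with ⟨k, hk⟩; rcases h3 with ⟨m, hm⟩; omega
        rcases this with h | h
        · left; refine ⟨h1, ?_⟩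
          have := Int.lt_floor_add_one t
          rw [h] at this; exact_mod_cast this
        · right; refine ⟨?_, h2⟩
          have := Int.floor_le t
          rw [h] at this; push_cast at this ⊢; linarith
      · rintro (⟨h1, h2⟩ | ⟨h1, h2⟩)
        · have : ⌊t⌋ = ⌊a⌋ := by
            have := Int.floor_le_floor h1
            have : ⌊t⌋ < ⌊a⌋ + 1 := by
              have := Int.floor_le t; exact_mod_cast Int.floor_lt.mpr (by push_cast; linarith)
            have := Int.floor_le_floor h1; omega
          refine ⟨⟨h1, by linarith⟩, this ▸ he⟩
        · have h3 : ⌊t⌋ = ⌊a⌋ + 2 := by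
            have hu : ⌊t⌋ < ⌊a⌋ + 3 := Int.floor_lt.mpr (by push_cast; linarith)
            have hl : (⌊a⌋ + 2 : ℤ) ≤ ⌊t⌋ := Int.le_floor.mpr (by push_cast; linarith)
            omega
          exact ⟨⟨by linarith, h2⟩, by rcases he with ⟨k,hk⟩; exact ⟨k+1, by omega⟩ ⟩
    rw [hset, measure_union ?dis measurableSet_Icc, Real.volume_Ico, Real.volume_Icc,
      ← ENNReal.ofReal_add (by linarith) (by linarith), show (⌊a⌋:ℝ)+1-a + (a+2-((⌊a⌋:ℝ)+2)) = 1 by ring,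
      ENNReal.ofReal_one]
    case dis =>
      apply Set.disjoint_left.mpr
      rintro t ⟨_, h2⟩ ⟨h3, _⟩
      linarith
  · have hset : Set.Icc a (a+2) ∩ {t | Even ⌊t⌋} = Set.Ico ((⌊a⌋:ℝ)+1) ((⌊a⌋:ℝ)+2) := by
      ext t
      simp only [Set.mem_inter_iff, Set.mem_Icc, Set.mem_setOf_eq, Set.mem_Ico]
      constructor
      · rintro ⟨⟨h1, h2⟩, h3⟩
        have l1 : (⌊a⌋ : ℤ) ≤ ⌊t⌋ := Int.floor_le_floor h1
        have l2 : ⌊t⌋ ≤ ⌊a⌋ + 2 := by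
          have h4 : ⌊a + 2⌋ = ⌊a⌋ + 2 := by
            rw [show a + 2 = a + (2:ℤ) by push_cast; ring, Int.floor_add_intCast]
          have := Int.floor_le_floor h2; omega
        have heq : ⌊t⌋ = ⌊a⌋ + 1 := by
          rcases ho with ⟨k, hk⟩; rcases h3 with ⟨m, hm⟩; omega
        constructor
        · have := Int.floor_le t; rw [heq] at this; push_cast at this; linarith
        · have := Int.lt_floor_add_one t; rw [heq] at this; push_cast at this; linarith
      · rintro ⟨h1, h2⟩
        have heq : ⌊t⌋ = ⌊a⌋ + 1 := by
          have hl : (⌊a⌋ + 1 : ℤ) ≤ ⌊t⌋ := Int.le_floor.mpr (by push_cast; linarith)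
          have hu : ⌊t⌋ < ⌊a⌋ + 2 := Int.floor_lt.mpr (by push_cast; linarith)
          omega
        exact ⟨⟨by linarith, by linarith⟩, by rw [heq]; rcases ho with ⟨k,hk⟩; exact ⟨k+1, by omega⟩⟩
    rw [hset, Real.volume_Ico, show (⌊a⌋:ℝ)+2-((⌊a⌋:ℝ)+1) = 1 by ring, ENNReal.ofReal_one]

/-- A fat half-level set: with `E = {x ∈ ℝ^d : ⌊x_d⌋ even}` and `K = 2^{−d} χ_{[−1,1]^d}`,
    the convolution `K ∗ χ_E` is identically `1/2`; in particular, `T_K E = ∅`,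
    `T_K(Eᶜ) = ∅`, and the `1/2`-level set is all of `ℝ^d`. -/
theorem fat_half_level_set (d : ℕ) (hd : 1 ≤ d) :
    ∀ (E : Set (EuclideanSpace ℝ (Fin d))) (K : EuclideanSpace ℝ (Fin d) → ℝ),
      E = {x | Even ⌊x ⟨d - 1, by omega⟩⌋} →
      (K = fun x => if ∀ i, |x i| ≤ 1 then (2 : ℝ) ^ (-(d : ℤ)) else 0) →
      (∀ x, conv K E x = 1 / 2) ∧
      thresh K E = ∅ ∧ thresh K Eᶜ = ∅ ∧
      {x | conv K E x = 1 / 2} = Set.univ := by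
  intro E K hE hK
  set ℓ : Fin d := ⟨d - 1, by omega⟩ with hℓ
  have hEmeas : MeasurableSet E := by
    rw [hE]
    have hm : Measurable (fun y : EuclideanSpace ℝ (Fin d) => y ℓ) :=
      (measurable_pi_apply ℓ).comp (WithLp.measurable_ofLp 2 _)
    exact hm evenFloor_measurable
  have key : ∀ x, conv K E x = 1 / 2 ∧ conv K Eᶜ x = 1 / 2 := by
    intro x
    set Box : Set (EuclideanSpace ℝ (Fin d)) :=
      (WithLp.ofLp : EuclideanSpace ℝ (Fin d) → Fin d → ℝ) ⁻¹'
        Set.pi Set.univ (fun i => Set.Icc (x i - 1) (x i + 1)) with hBox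
    have hBoxMeas : MeasurableSet Box := by
      have h : MeasurableSet (Set.pi Set.univ
          (fun i : Fin d => Set.Icc (x i - 1) (x i + 1)) : Set (Fin d → ℝ)) :=
        MeasurableSet.univ_pi (X := fun _ : Fin d => ℝ)
          (fun i => measurableSet_Icc)
      exact (WithLp.measurable_ofLp 2 _) h
    -- rewrite the integrand as an indicator
    have hfun : ∀ F : Set (EuclideanSpace ℝ (Fin d)),
        (fun y => K (x - y) * F.indicator (fun _ => (1:ℝ)) y)
        = (Box ∩ F).indicator (fun _ => (2:ℝ) ^ (-(d:ℤ))) := by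
      intro F
      classical
      funext y
      have hxy : ∀ i, (x - y) i = x i - y i := fun i => rfl
      have hiff : (∀ i, |(x - y) i| ≤ 1) ↔ y ∈ Box := by
        constructor
        · intro h i _
          have := h i; rw [hxy i, abs_le] at this
          exact Set.mem_Icc.mpr ⟨by linarith [this.1], by linarith [this.2]⟩
        · intro h i
          rw [hxy i, abs_le]
          have := Set.mem_Icc.mp (h i (Set.mem_univ i))
          exact ⟨by linarith [this.1], by linarith [this.2]⟩
      rw [hK, Set.indicator_apply, Set.indicator_apply]
      beta_reduce
      by_cases h1 : y ∈ Box <;> by_cases h2 : y ∈ F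
      · rw [if_pos (hiff.mpr h1), if_pos h2, if_pos (Set.mem_inter h1 h2), mul_one]
      · rw [if_neg h2, mul_zero,
          if_neg (fun h => h2 (Set.mem_of_mem_inter_right h))]
      · rw [if_pos h2, mul_one, if_neg (fun hc => h1 (hiff.mp hc)),
          if_neg (fun h => h1 (Set.mem_of_mem_inter_left h))]
      · rw [if_neg h2, mul_zero,
          if_neg (fun h => h1 (Set.mem_of_mem_inter_left h))]
    have hconv : ∀ F : Set (EuclideanSpace ℝ (Fin d)), MeasurableSet F →
        conv K F x = (volume (Box ∩ F)).toReal * (2:ℝ) ^ (-(d:ℤ)) := by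
      intro F hF
      unfold conv
      rw [hfun F, integral_indicator_const _ (hBoxMeas.inter hF), smul_eq_mul, measureReal_def]
    -- the volume of Box ∩ E
    have hvolE : volume (Box ∩ E) = 2 ^ (d - 1) := by
      set s : Fin d → Set ℝ := fun i =>
        if i = ℓ then Set.Icc (x ℓ - 1) (x ℓ + 1) ∩ {t | Even ⌊t⌋}
        else Set.Icc (x i - 1) (x i + 1) with hs
      have hpre : Box ∩ E =
          (MeasurableEquiv.toLp 2 (Fin d → ℝ)).symm ⁻¹' (Set.pi Set.univ s) := by
        rw [hE]
        ext y
        constructor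
        · rintro ⟨h1, h2⟩ i _
          show y i ∈ s i
          by_cases hi : i = ℓ
          · subst hi; simp only [hs, if_pos rfl]
            exact ⟨h1 ℓ (Set.mem_univ ℓ), h2⟩
          · simp only [hs, if_neg hi]; exact h1 i (Set.mem_univ i)
        · intro h
          constructor
          · intro i _
            have hi' : y i ∈ s i := h i (Set.mem_univ i)
            by_cases hi : i = ℓ
            · subst hi; simp only [hs, if_pos rfl] at hi'; exact hi'.1
            · simpa only [hs, if_neg hi] using hi'
          · have hi' : y ℓ ∈ s ℓ := h ℓ (Set.mem_univ ℓ)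
            simp only [hs, if_pos rfl] at hi'; exact hi'.2
      rw [hpre,
        (EuclideanSpace.volume_preserving_symm_measurableEquiv_toLp (Fin d)).measure_preimage_equiv,
        volume_pi_pi]
      have hval : ∀ i, volume (s i) = if i = ℓ then 1 else 2 := by
        intro i
        by_cases hi : i = ℓ
        · subst hi
          rw [if_pos rfl]
          simp only [hs, if_pos rfl]
          rw [show Set.Icc (x ℓ - 1) (x ℓ + 1) = Set.Icc (x ℓ - 1) ((x ℓ - 1) + 2) from
            by congr 1; ring]
          exact vol_even_floor _
        · rw [if_neg hi]
          simp only [hs, if_neg hi]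
          rw [Real.volume_Icc, show x i + 1 - (x i - 1) = 2 by ring]
          norm_num
      calc ∏ i, volume (s i) = ∏ i, (if i = ℓ then (1:ENNReal) else 2) :=
            Finset.prod_congr rfl (fun i _ => hval i)
        _ = 2 ^ (d - 1) := by
            rw [← Finset.mul_prod_erase Finset.univ _ (Finset.mem_univ ℓ), if_pos rfl,
              one_mul,
              Finset.prod_congr rfl (fun i hi => if_neg (Finset.ne_of_mem_erase hi)),
              Finset.prod_const, Finset.card_erase_of_mem (Finset.mem_univ ℓ),
              Finset.card_univ, Fintype.card_fin]
    -- the volume of the whole box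
    have hvolBox : volume Box = 2 ^ d := by
      have hpreB : Box = (MeasurableEquiv.toLp 2 (Fin d → ℝ)).symm ⁻¹'
          (Set.pi Set.univ (fun i => Set.Icc (x i - 1) (x i + 1))) := rfl
      rw [hpreB,
        (EuclideanSpace.volume_preserving_symm_measurableEquiv_toLp (Fin d)).measure_preimage_equiv,
        volume_pi_pi]
      calc ∏ i, volume (Set.Icc (x i - 1) (x i + 1)) = ∏ _i : Fin d, (2:ENNReal) :=
            Finset.prod_congr rfl (fun i _ => by
              rw [Real.volume_Icc, show x i + 1 - (x i - 1) = 2 by ring]; norm_num)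
        _ = 2 ^ d := by rw [Finset.prod_const, Finset.card_univ, Fintype.card_fin]
    -- the volume of Box ∩ Eᶜ
    have hvolEc : volume (Box ∩ Eᶜ) = 2 ^ (d - 1) := by
      have hsplit : Box ∩ Eᶜ = Box \ (Box ∩ E) := by
        ext y; simp only [Set.mem_inter_iff, Set.mem_compl_iff, Set.mem_diff]; tauto
      rw [hsplit, measure_diff Set.inter_subset_left
        ((hBoxMeas.inter hEmeas).nullMeasurableSet)
        (by rw [hvolE]; exact ENNReal.pow_ne_top (by norm_num)),
        hvolE, hvolBox]
      have h2 : (2:ENNReal) ^ d = 2 ^ (d-1) + 2 ^ (d-1) := by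
        rw [← two_mul, ← pow_succ']
        congr 1
        omega
      rw [h2, ENNReal.add_sub_cancel_right (ENNReal.pow_ne_top (by norm_num))]
    -- arithmetic
    have harith : ((2:ENNReal) ^ (d - 1)).toReal * (2:ℝ) ^ (-(d:ℤ)) = 1 / 2 := by
      have h1 : ((2:ENNReal) ^ (d-1)).toReal = (2:ℝ) ^ (d-1) := by simp
      rw [h1, show (2:ℝ) ^ (-(d:ℤ)) = ((2:ℝ)^(d:ℕ))⁻¹ by rw [zpow_neg, zpow_natCast],
        show (2:ℝ) ^ (d:ℕ) = 2 ^ (d-1) * 2 by rw [← pow_succ]; congr 1; omega]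
      rw [mul_inv, ← mul_assoc, mul_inv_cancel₀ (by positivity : (2:ℝ)^(d-1) ≠ 0)]
      norm_num
    exact ⟨by rw [hconv E hEmeas, hvolE]; exact harith,
      by rw [hconv Eᶜ hEmeas.compl, hvolEc]; exact harith⟩
  refine ⟨fun x => (key x).1, ?_, ?_, ?_⟩
  · ext x
    simp [thresh, (key x).1]
  · ext x
    simp [thresh, (key x).2]
  · ext x
    simp [(key x).1]
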